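/- Let σ ∈ (1,2) and let (A_j)_{j≥0}, (F_j)_{j≥0} be sequences of nonnegative reals with A_j ≤ F_j + N Σ_{l=j+1}^∞ 2^{(1−σ)l} A_l for all j ≥ 0, where N > 0, and suppose Σ_j 2^{(1−σ)j} A_j < ∞. Then there exists N' = N'(N, σ) such that Σ_{j=0}^∞ 2^{(1−σ)j} A_j ≤ N' Σ_{j=0}^∞ 2^{(1−σ)j} F_j. -/

import Mathlib

open scoped ENNReal

set_option maxHeartbeats 1000000

noncomputable section

/-- Iteration/absorption lemma: if `A_j ≤ F_j + N Σ_{l>j} 2^{(1-σ)l} A_l` for all `j`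
and `Σ_j 2^{(1-σ)j} A_j < ∞`, then `Σ_j 2^{(1-σ)j} A_j ≤ N' Σ_j 2^{(1-σ)j} F_j`. -/
theorem stmt_15 (σ N : ℝ) (hσ : σ ∈ Set.Ioo (1:ℝ) 2) (hN : 0 < N) :
    ∃ N' : ℝ, 0 < N' ∧ ∀ A F : ℕ → ℝ≥0∞,
      (∀ j : ℕ, A j ≤ F j + ENNReal.ofReal N *
        ∑' l : ℕ, if j < l then ENNReal.ofReal ((2:ℝ) ^ ((1 - σ) * l)) * A l else 0) →
      (∑' j : ℕ, ENNReal.ofReal ((2:ℝ) ^ ((1 - σ) * j)) * A j ≠ ⊤) →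
      (∑' j : ℕ, ENNReal.ofReal ((2:ℝ) ^ ((1 - σ) * j)) * A j)
        ≤ ENNReal.ofReal N' * ∑' j : ℕ, ENNReal.ofReal ((2:ℝ) ^ ((1 - σ) * j)) * F j := by
  obtain ⟨hσ1, hσ2⟩ := hσ
  -- the geometric ratio
  set r : ℝ := (2:ℝ) ^ (1 - σ) with hr_def
  have hr0 : 0 < r := Real.rpow_pos_of_pos two_pos _
  have hr1 : r < 1 := Real.rpow_lt_one_of_one_lt_of_neg one_lt_two (by linarith)
  -- choose j₀ with N * r^j₀ ≤ (1-r)/2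
  obtain ⟨j₀, hj₀⟩ : ∃ n : ℕ, r ^ n < (1 - r) / (2 * N) :=
    exists_pow_lt_of_lt_one (div_pos (by linarith) (by positivity)) hr1
  have hj₀' : N * r ^ j₀ ≤ (1 - r) / 2 := by
    have h1 : N * r ^ j₀ ≤ N * ((1 - r) / (2 * N)) :=
      mul_le_mul_of_nonneg_left hj₀.le hN.le
    have h2 : N * ((1 - r) / (2 * N)) = (1 - r) / 2 := by
      field_simp
    linarith
  refine ⟨2 * (N + 2) ^ j₀, by positivity, ?_⟩
  intro A F hA hfin
  set w : ℕ → ℝ≥0∞ := fun j => ENNReal.ofReal ((2:ℝ) ^ ((1 - σ) * j)) with hw_def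
  set q : ℝ≥0∞ := ENNReal.ofReal r with hq_def
  have hw : ∀ j : ℕ, w j = q ^ j := by
    intro j
    rw [hw_def, hq_def, ← ENNReal.ofReal_pow hr0.le]
    congr 1
    rw [hr_def, ← Real.rpow_natCast ((2:ℝ) ^ (1 - σ)) j, ← Real.rpow_mul (by norm_num)]
  have hq1 : q < 1 := by
    rw [hq_def, ← ENNReal.ofReal_one]
    exact ENNReal.ofReal_lt_ofReal_iff_of_nonneg hr0.le |>.mpr hr1
  have hwle1 : ∀ j, w j ≤ 1 := fun j => by
    rw [hw]; exact pow_le_one₀ zero_le hq1.le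
  -- the tails
  set T : ℕ → ℝ≥0∞ := fun m => ∑' l : ℕ, if m ≤ l then w l * A l else 0 with hT_def
  have hT0 : T 0 = ∑' j : ℕ, w j * A j := by
    simp [hT_def]
  have hTsucc : ∀ m, T m = w m * A m + T (m + 1) := by
    intro m
    show (∑' l : ℕ, if m ≤ l then w l * A l else 0)
      = w m * A m + ∑' l : ℕ, if m + 1 ≤ l then w l * A l else 0
    rw [ENNReal.tsum_eq_add_tsum_ite m]
    simp only [le_refl, if_true]
    congr 1
    exact tsum_congr fun l => by
      split_ifs with h1 h2 h3 <;> first | rfl | omega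
  have hTmono : ∀ m, T m ≤ T 0 := by
    intro m
    refine Summable.tsum_le_tsum (fun l => ?_) ENNReal.summable ENNReal.summable
    split_ifs with h1 h2
    · exact le_rfl
    · omega
    · exact zero_le
    · exact le_rfl
  have hTfin : ∀ m, T m ≠ ⊤ := fun m =>
    ne_top_of_le_ne_top (hT0 ▸ hfin) (hTmono m)
  -- rewrite hypothesis using T
  have hA' : ∀ j, A j ≤ F j + ENNReal.ofReal N * T (j + 1) := by
    intro j
    have := hA j
    have heq : (∑' l : ℕ, if j < l then w l * A l else 0) = T (j + 1) :=
      tsum_congr fun l => if_congr (by omega) rfl rfl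
    rwa [heq] at this
  set SF : ℝ≥0∞ := ∑' j : ℕ, w j * F j with hSF_def
  have hFle : ∀ j, w j * F j ≤ SF := fun j => ENNReal.le_tsum j
  -- geometric sum bound
  have hgeo : (∑' j : ℕ, if j₀ ≤ j then w j else 0) = q ^ j₀ * (1 - q)⁻¹ := by
    have hsum := Summable.sum_add_tsum_nat_add' (f := fun j => if j₀ ≤ j then w j else 0) (k := j₀)
      ENNReal.summable
    have hzero : (∑ i ∈ Finset.range j₀, if j₀ ≤ i then w i else 0) = 0 := by
      apply Finset.sum_eq_zero
      intro i hi
      rw [if_neg (by simpa using Finset.mem_range.mp hi)]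
    rw [← hsum, hzero, zero_add]
    have : ∀ i : ℕ, (if j₀ ≤ i + j₀ then w (i + j₀) else 0) = q ^ j₀ * q ^ i := by
      intro i
      rw [if_pos (Nat.le_add_left _ _), hw, pow_add, mul_comm]
    rw [tsum_congr this, ENNReal.tsum_mul_left, ENNReal.tsum_geometric]
  -- base: double sum absorption
  have hbase : T j₀ ≤ 2 * SF := by
    have step1 : T j₀ ≤ SF + ENNReal.ofReal N *
        ∑' j : ℕ, if j₀ ≤ j then w j * T (j + 1) else 0 := by
      have h1 : T j₀ ≤ (∑' j : ℕ, if j₀ ≤ j then w j * F j else 0) +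
          ∑' j : ℕ, if j₀ ≤ j then ENNReal.ofReal N * (w j * T (j + 1)) else 0 := by
        rw [hT_def, ← ENNReal.tsum_add]
        refine Summable.tsum_le_tsum (fun j => ?_) ENNReal.summable ENNReal.summable
        split_ifs with h
        · calc w j * A j ≤ w j * (F j + ENNReal.ofReal N * T (j + 1)) :=
                mul_le_mul_right (hA' j) _
            _ = w j * F j + ENNReal.ofReal N * (w j * T (j + 1)) := by ring
        · simp
      have h2 : (∑' j : ℕ, if j₀ ≤ j then w j * F j else 0) ≤ SF := by
        refine Summable.tsum_le_tsum (fun j => ?_) ENNReal.summable ENNReal.summable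
        split_ifs <;> simp
      have h3 : (∑' j : ℕ, if j₀ ≤ j then ENNReal.ofReal N * (w j * T (j + 1)) else 0)
          = ENNReal.ofReal N * ∑' j : ℕ, if j₀ ≤ j then w j * T (j + 1) else 0 := by
        rw [← ENNReal.tsum_mul_left]
        exact tsum_congr fun j => by split_ifs <;> simp
      calc T j₀ ≤ _ := h1
        _ ≤ _ := add_le_add h2 (le_of_eq h3)
    have step2 : (∑' j : ℕ, if j₀ ≤ j then w j * T (j + 1) else 0)
        ≤ T j₀ * (q ^ j₀ * (1 - q)⁻¹) := by
      have hexp : ∀ j : ℕ, (if j₀ ≤ j then w j * T (j + 1) else 0)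
          = ∑' l : ℕ, if j₀ ≤ j then (if j + 1 ≤ l then w j * (w l * A l) else 0) else 0 := by
        intro j
        split_ifs with h
        · rw [hT_def]
          rw [← ENNReal.tsum_mul_left]
          exact tsum_congr fun l => by split_ifs <;> simp
        · simp
      rw [tsum_congr hexp]
      have hptwise : ∀ j l : ℕ,
          (if j₀ ≤ j then (if j + 1 ≤ l then w j * (w l * A l) else 0) else 0)
          ≤ (if j₀ ≤ l then w l * A l else 0) * (if j₀ ≤ j then w j else 0) := by
        intro j l
        split_ifs with h1 h2 h3 <;> first | omega | exact zero_le | rw [mul_comm]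
      calc (∑' j : ℕ, ∑' l : ℕ,
            if j₀ ≤ j then (if j + 1 ≤ l then w j * (w l * A l) else 0) else 0)
          ≤ ∑' j : ℕ, ∑' l : ℕ,
            (if j₀ ≤ l then w l * A l else 0) * (if j₀ ≤ j then w j else 0) := by
            refine Summable.tsum_le_tsum (fun j => ?_) ENNReal.summable ENNReal.summable
            exact Summable.tsum_le_tsum (fun l => hptwise j l) ENNReal.summable ENNReal.summable
        _ = ∑' j : ℕ, (∑' l : ℕ, if j₀ ≤ l then w l * A l else 0) *
              (if j₀ ≤ j then w j else 0) :=
            tsum_congr fun j => ENNReal.tsum_mul_right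
        _ = (∑' l : ℕ, if j₀ ≤ l then w l * A l else 0) *
            ∑' j : ℕ, if j₀ ≤ j then w j else 0 := ENNReal.tsum_mul_left
        _ = T j₀ * (q ^ j₀ * (1 - q)⁻¹) := by rw [← hgeo]
    have hcoef : ENNReal.ofReal N * (q ^ j₀ * (1 - q)⁻¹) ≤ 2⁻¹ := by
      have h1q : (1 : ℝ≥0∞) - q = ENNReal.ofReal (1 - r) := by
        rw [hq_def, ENNReal.ofReal_sub 1 hr0.le, ENNReal.ofReal_one]
      have : ENNReal.ofReal N * (q ^ j₀ * (1 - q)⁻¹)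
          = ENNReal.ofReal (N * (r ^ j₀ * (1 - r)⁻¹)) := by
        rw [h1q, hq_def, ← ENNReal.ofReal_pow hr0.le,
          ← ENNReal.ofReal_inv_of_pos (by linarith),
          ← ENNReal.ofReal_mul (by positivity), ← ENNReal.ofReal_mul hN.le]
      rw [this]
      have h2 : N * (r ^ j₀ * (1 - r)⁻¹) ≤ 2⁻¹ := by
        rw [← mul_assoc, mul_inv_le_iff₀ (by linarith : (0:ℝ) < 1 - r)]
        linarith
      calc ENNReal.ofReal (N * (r ^ j₀ * (1 - r)⁻¹)) ≤ ENNReal.ofReal 2⁻¹ :=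
            ENNReal.ofReal_le_ofReal h2
        _ = 2⁻¹ := by
            rw [ENNReal.ofReal_inv_of_pos (by norm_num)]
            norm_num
    have habs : T j₀ ≤ SF + 2⁻¹ * T j₀ := by
      refine step1.trans (add_le_add_right ?_ _)
      calc ENNReal.ofReal N * ∑' j : ℕ, (if j₀ ≤ j then w j * T (j + 1) else 0)
          ≤ ENNReal.ofReal N * (T j₀ * (q ^ j₀ * (1 - q)⁻¹)) :=
            mul_le_mul_right step2 _
        _ = (ENNReal.ofReal N * (q ^ j₀ * (1 - q)⁻¹)) * T j₀ := by ring
        _ ≤ 2⁻¹ * T j₀ := mul_le_mul_left hcoef _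
    -- absorb
    have hhalf : T j₀ / 2 ≤ SF := by
      rw [← ENNReal.sub_half (hTfin j₀)]
      rw [tsub_le_iff_right]
      calc T j₀ ≤ SF + 2⁻¹ * T j₀ := habs
        _ = SF + T j₀ / 2 := by rw [ENNReal.div_eq_inv_mul]
    calc T j₀ = 2 * (T j₀ / 2) := by
          rw [ENNReal.mul_div_cancel' (by norm_num) (by norm_num)]
      _ ≤ 2 * SF := mul_le_mul_right hhalf _
  -- downward induction
  have hind : ∀ k : ℕ, T (j₀ - k) ≤ ENNReal.ofReal (2 * (N + 2) ^ k) * SF := by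
    intro k
    induction k with
    | zero =>
      simpa using hbase
    | succ k ih =>
      have hmono_coef : ENNReal.ofReal (2 * (N + 2) ^ k) * SF
          ≤ ENNReal.ofReal (2 * (N + 2) ^ (k + 1)) * SF := by
        refine mul_le_mul_left (ENNReal.ofReal_le_ofReal ?_) _
        have h1 : (1:ℝ) ≤ N + 2 := by linarith
        have := pow_le_pow_right₀ h1 (show k ≤ k + 1 by omega)
        linarith
      by_cases hk : j₀ ≤ k
      · have : j₀ - (k + 1) = j₀ - k := by omega
        rw [this]
        exact ih.trans hmono_coef
      · set m := j₀ - (k + 1) with hm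
        have hm1 : m + 1 = j₀ - k := by omega
        have key : T m ≤ ENNReal.ofReal (1 + (N + 1) * (2 * (N + 2) ^ k)) * SF := by
          have hTm1 : T (m + 1) ≤ ENNReal.ofReal (2 * (N + 2) ^ k) * SF := hm1 ▸ ih
          calc T m = w m * A m + T (m + 1) := hTsucc m
            _ ≤ w m * (F m + ENNReal.ofReal N * T (m + 1)) + T (m + 1) :=
                add_le_add_left (mul_le_mul_right (hA' m) _) _
            _ = w m * F m + w m * (ENNReal.ofReal N * T (m + 1)) + T (m + 1) := by ring
            _ ≤ SF + ENNReal.ofReal N * T (m + 1) + T (m + 1) := by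
                refine add_le_add (add_le_add (hFle m) ?_) le_rfl
                calc w m * (ENNReal.ofReal N * T (m + 1))
                    ≤ 1 * (ENNReal.ofReal N * T (m + 1)) :=
                      mul_le_mul_left (hwle1 m) _
                  _ = ENNReal.ofReal N * T (m + 1) := one_mul _
            _ ≤ SF + ENNReal.ofReal N * (ENNReal.ofReal (2 * (N + 2) ^ k) * SF)
                + ENNReal.ofReal (2 * (N + 2) ^ k) * SF := by
                exact add_le_add (add_le_add le_rfl (mul_le_mul_right hTm1 _)) hTm1
            _ = (1 + ENNReal.ofReal N * ENNReal.ofReal (2 * (N + 2) ^ k)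
                + ENNReal.ofReal (2 * (N + 2) ^ k)) * SF := by ring
            _ = ENNReal.ofReal (1 + (N + 1) * (2 * (N + 2) ^ k)) * SF := by
                congr 1
                rw [← ENNReal.ofReal_mul hN.le, ← ENNReal.ofReal_one,
                  ← ENNReal.ofReal_add (by norm_num) (by positivity),
                  ← ENNReal.ofReal_add (by positivity) (by positivity)]
                congr 1
                ring
        refine key.trans (mul_le_mul_left (ENNReal.ofReal_le_ofReal ?_) _)
        have h1 : (1:ℝ) ≤ (N + 2) ^ k := one_le_pow₀ (by linarith)
        have : (2:ℝ) * (N + 2) ^ (k + 1) = 2 * (N + 2) ^ k * (N + 2) := by ring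
        nlinarith
  have hfinal := hind j₀
  rw [Nat.sub_self, hT0] at hfinal
  exact hfinal
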